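/- arXiv:2201.05223 — 4 statements merged into one kernel-verified Lean document; each statement's English description precedes it below -/
import Mathlib

section
/- Let γ > 0, κ₀ > 0, ρ ≥ 0, and 0 < ε < x₁. Let m : ℝ × ℝ → [0,∞) be measurable with ∫_ℝ m(x,y) dy = 1 for every x ∈ ℝ and m(x,y) ≥ κ₀ · 1_{(x−ε,x+ε)}(y) for all x, y ∈ ℝ. Let h : ℝ → ℝ be continuous and assume γ κ₀ ε³ ≥ 12 ρ x₁. Define ψ₀(x) = ((1 − x²/x₁²)₊)², Lφ(x) = ρ φ'(x) + γ ∫_ℝ (φ(y) − φ(x)) m(x,y) dy, and β₀ = inf_{x ∈ (−x₁,x₁)} h(x) − γ. Then for every x ∈ ℝ: Lψ₀(x) + h(x) ψ₀(x) ≥ β₀ ψ₀(x). -/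
open MeasureTheory

lemma hasDerivAt_maxSq (t : ℝ) :
    HasDerivAt (fun s : ℝ => max s 0 ^ 2) (2 * max t 0) t := by
  rcases lt_trichotomy t 0 with ht | ht | ht
  · have hev : (fun s : ℝ => max s 0 ^ 2) =ᶠ[nhds t] fun _ => (0:ℝ) := by
      filter_upwards [Iio_mem_nhds ht] with s hs
      simp [max_eq_right (le_of_lt (Set.mem_Iio.mp hs))]
    have : HasDerivAt (fun _ : ℝ => (0:ℝ)) 0 t := hasDerivAt_const t 0
    simpa [max_eq_right ht.le] using this.congr_of_eventuallyEq hev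
  · subst ht
    rw [hasDerivAt_iff_isLittleO]
    simp only [max_self, mul_zero, smul_zero, sub_zero, ne_eq, OfNat.ofNat_ne_zero,
      not_false_eq_true, zero_pow]
    rw [Asymptotics.isLittleO_iff]
    intro c hc
    filter_upwards [Metric.ball_mem_nhds (0:ℝ) hc] with s hs
    rw [Real.norm_eq_abs, Real.norm_eq_abs]
    have h1 : max s 0 ≤ |s| := le_trans (max_le_max (le_abs_self s) (abs_nonneg s)) (by simp)
    have h2 : (0:ℝ) ≤ max s 0 := le_max_right _ _
    have hs' : |s| < c := by simpa [Real.dist_eq] using hs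
    calc |max s 0 ^ 2| = max s 0 * max s 0 := by rw [abs_of_nonneg (by positivity)]; ring
      _ ≤ |s| * |s| := mul_le_mul h1 h1 h2 (abs_nonneg s)
      _ ≤ c * |s| := by nlinarith [abs_nonneg s]
  · have hev : (fun s : ℝ => max s 0 ^ 2) =ᶠ[nhds t] fun s => s ^ 2 := by
      filter_upwards [Ioi_mem_nhds ht] with s hs
      simp [max_eq_left (le_of_lt (Set.mem_Ioi.mp hs))]
    have : HasDerivAt (fun s : ℝ => s ^ 2) (2 * t) t := by
      simpa using hasDerivAt_pow 2 t
    simpa [max_eq_left ht.le] using this.congr_of_eventuallyEq hev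

lemma psi_hasDerivAt (x₁ : ℝ) (x : ℝ) :
    HasDerivAt (fun x : ℝ => (max (1 - x ^ 2 / x₁ ^ 2) 0) ^ 2)
      (2 * max (1 - x ^ 2 / x₁ ^ 2) 0 * (-(2 * x) / x₁ ^ 2)) x := by
  have hu : HasDerivAt (fun x : ℝ => 1 - x ^ 2 / x₁ ^ 2) (-(2 * x) / x₁ ^ 2) x := by
    have : HasDerivAt (fun x : ℝ => x ^ 2 / x₁ ^ 2) (2 * x / x₁ ^ 2) x := by
      simpa using (hasDerivAt_pow 2 x).div_const (x₁ ^ 2)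
    simpa [neg_div] using this.const_sub (1:ℝ)
  exact (hasDerivAt_maxSq _).comp x hu

/-- On `Ioo a (a+ε)` an integral of `(a+ε-y)^2/x₁^2` equals `ε^3/(3 x₁^2)`. -/
lemma integral_bump_right (a ε x₁ : ℝ) (hε : 0 < ε) :
    ∫ y in Set.Ioo a (a + ε), (a + ε - y) ^ 2 / x₁ ^ 2 = ε ^ 3 / (3 * x₁ ^ 2) := by
  rw [← integral_Ioc_eq_integral_Ioo,
    ← intervalIntegral.integral_of_le (by linarith : a ≤ a + ε),
    intervalIntegral.integral_div,
    intervalIntegral.integral_comp_sub_left (fun s => s ^ 2) (a + ε)]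
  rw [show a + ε - (a + ε) = 0 by ring, show a + ε - a = ε by ring, integral_pow]
  norm_num
  ring

lemma integral_bump_left (b ε x₁ : ℝ) (hε : 0 < ε) :
    ∫ y in Set.Ioo (b - ε) b, (y - (b - ε)) ^ 2 / x₁ ^ 2 = ε ^ 3 / (3 * x₁ ^ 2) := by
  rw [← integral_Ioc_eq_integral_Ioo,
    ← intervalIntegral.integral_of_le (by linarith : b - ε ≤ b),
    intervalIntegral.integral_div,
    intervalIntegral.integral_comp_sub_right (fun s => s ^ 2) (b - ε)]
  rw [show b - ε - (b - ε) = 0 by ring, show b - (b - ε) = ε by ring, integral_pow]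
  norm_num
  ring

set_option maxHeartbeats 1000000

/-- Lyapunov-type inequality `(L + h)ψ₀ ≥ β₀ ψ₀` for the test function
`ψ₀(x) = ((1 − x²/x₁²)₊)²` and the generator
`Lφ(x) = ρ φ'(x) + γ ∫ (φ(y) − φ(x)) m(x,y) dy`, where
`β₀ = inf_{(−x₁,x₁)} h − γ`, under the kernel lower bound
`m(x,y) ≥ κ₀ 1_{(x−ε,x+ε)}(y)` and the condition `γ κ₀ ε³ ≥ 12 ρ x₁`. -/
theorem lyapunov_inequality (γ κ₀ ρ ε x₁ : ℝ) (hγ : 0 < γ) (hκ : 0 < κ₀)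
    (hρ : 0 ≤ ρ) (hε : 0 < ε) (hεx : ε < x₁)
    (m : ℝ → ℝ → ℝ) (hm : Measurable (Function.uncurry m)) (hm0 : ∀ x y, 0 ≤ m x y)
    (hm1 : ∀ x, (∫ y, m x y) = 1)
    (hmlb : ∀ x y,
      κ₀ * Set.indicator (Set.Ioo (x - ε) (x + ε)) (fun _ => (1 : ℝ)) y ≤ m x y)
    (h : ℝ → ℝ) (hh : Continuous h)
    (hcond : 12 * ρ * x₁ ≤ γ * κ₀ * ε ^ 3)
    (ψ₀ : ℝ → ℝ) (hψ : ψ₀ = fun x => (max (1 - x ^ 2 / x₁ ^ 2) 0) ^ 2)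
    (β₀ : ℝ) (hβ : β₀ = sInf (h '' Set.Ioo (-x₁) x₁) - γ) :
    ∀ x : ℝ,
      β₀ * ψ₀ x ≤ ρ * deriv ψ₀ x + γ * (∫ y, (ψ₀ y - ψ₀ x) * m x y) + h x * ψ₀ x := by
  have hx₁ : 0 < x₁ := hε.trans hεx
  have hψ0 : ∀ y, 0 ≤ ψ₀ y := by intro y; rw [hψ]; positivity
  have hψ1 : ∀ y, ψ₀ y ≤ 1 := by
    intro y; rw [hψ]
    have hq : 0 ≤ y ^ 2 / x₁ ^ 2 := by positivity
    have h1 : max (1 - y ^ 2 / x₁ ^ 2) 0 ≤ 1 := max_le (by linarith) zero_le_one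
    have h2 : (0:ℝ) ≤ max (1 - y ^ 2 / x₁ ^ 2) 0 := le_max_right _ _
    nlinarith
  have hψc : Continuous ψ₀ := by
    rw [hψ]
    exact ((continuous_const.sub ((continuous_pow 2).div_const _)).max continuous_const).pow 2
  intro x
  have hderiv : deriv ψ₀ x = 2 * max (1 - x ^ 2 / x₁ ^ 2) 0 * (-(2 * x) / x₁ ^ 2) := by
    rw [hψ]; exact (psi_hasDerivAt x₁ x).deriv
  -- integrability facts
  have hmx : Measurable (m x) := hm.comp measurable_prodMk_left
  have him : Integrable (m x) := by
    by_contra hc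
    have := hm1 x
    rw [integral_undef hc] at this
    norm_num at this
  have hint : Integrable (fun y => ψ₀ y * m x y) := by
    apply him.mono' ((hψc.measurable.mul hmx).aestronglyMeasurable)
    filter_upwards with y
    rw [Real.norm_eq_abs, Pi.mul_apply, abs_of_nonneg (mul_nonneg (hψ0 y) (hm0 x y))]
    calc ψ₀ y * m x y ≤ 1 * m x y := mul_le_mul_of_nonneg_right (hψ1 y) (hm0 x y)
      _ = m x y := one_mul _
  have hsplit : (∫ y, (ψ₀ y - ψ₀ x) * m x y) = (∫ y, ψ₀ y * m x y) - ψ₀ x := by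
    have he : (fun y => (ψ₀ y - ψ₀ x) * m x y)
        = fun y => ψ₀ y * m x y - ψ₀ x * m x y := by ext y; ring
    rw [he, integral_sub hint (him.const_mul _), integral_const_mul, hm1 x, mul_one]
  rcases le_or_gt x₁ |x| with hcase | hcase
  · -- outside the support
    have hle : 1 - x ^ 2 / x₁ ^ 2 ≤ 0 := by
      have hx2 : x₁ ^ 2 ≤ x ^ 2 := by
        rw [← sq_abs x]; nlinarith [abs_nonneg x]
      have : (1:ℝ) ≤ x ^ 2 / x₁ ^ 2 := (one_le_div (by positivity)).mpr hx2
      linarith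
    have hM : max (1 - x ^ 2 / x₁ ^ 2) 0 = 0 := max_eq_right hle
    have hψx : ψ₀ x = 0 := by rw [hψ]; simp only [hM]; ring
    have hI : 0 ≤ ∫ y, (ψ₀ y - ψ₀ x) * m x y := by
      apply integral_nonneg
      intro y
      simp only [Pi.zero_apply, hψx, sub_zero]
      exact mul_nonneg (hψ0 y) (hm0 x y)
    have hd : deriv ψ₀ x = 0 := by rw [hderiv, hM]; ring
    have hγI := mul_nonneg hγ.le hI
    rw [hψx] at hγI
    rw [hd, hψx]
    linarith
  · -- inside the support
    have hxl : -x₁ < x := (abs_lt.mp hcase).1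
    have hxr : x < x₁ := (abs_lt.mp hcase).2
    -- infimum bound
    have hβle : β₀ + γ ≤ h x := by
      have hbdd : BddBelow (h '' Set.Ioo (-x₁) x₁) :=
        ((isCompact_Icc.image hh).bddBelow).mono
          (Set.image_mono Set.Ioo_subset_Icc_self)
      have : sInf (h '' Set.Ioo (-x₁) x₁) ≤ h x :=
        csInf_le hbdd ⟨x, ⟨hxl, hxr⟩, rfl⟩
      rw [hβ]; linarith
    -- drift bound
    have hDb : -(4 * ρ / x₁) ≤ ρ * deriv ψ₀ x := by
      rw [hderiv]
      set M := max (1 - x ^ 2 / x₁ ^ 2) 0 with hMdef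
      have hM0 : 0 ≤ M := le_max_right _ _
      have hM1 : M ≤ 1 := by
        have hq : 0 ≤ x ^ 2 / x₁ ^ 2 := by positivity
        exact max_le (by linarith) zero_le_one
      have hxM : x * M ≤ x₁ := by
        nlinarith [mul_nonneg (sub_nonneg.mpr hxr.le) hM0,
          mul_nonneg hx₁.le (sub_nonneg.mpr hM1)]
      have he : ρ * (2 * M * (-(2 * x) / x₁ ^ 2)) = -((4 * ρ) * (x * M) / x₁ ^ 2) := by
        ring
      rw [he, neg_le_neg_iff]
      have h2 : (4 * ρ) * (x * M) / x₁ ^ 2 ≤ (4 * ρ) * x₁ / x₁ ^ 2 := by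
        apply div_le_div_of_nonneg_right ?_ (by positivity)
        · exact mul_le_mul_of_nonneg_left hxM (by positivity)
      have h3 : (4 * ρ) * x₁ / x₁ ^ 2 = 4 * ρ / x₁ := by
        field_simp
      linarith
    -- integral lower bound
    set x' := max (min x (x₁ - ε)) (ε - x₁) with hx'def
    have hx'lb : ε - x₁ ≤ x' := le_max_right _ _
    have hx'ub : x' ≤ x₁ - ε := max_le (le_trans (min_le_right _ _) (le_refl _)) (by linarith)
    -- pointwise lower bound for ψ₀
    have hpsilb : ∀ y t : ℝ, 0 < t → t ≤ x₁ - |y| → t ^ 2 / x₁ ^ 2 ≤ ψ₀ y := by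
      intro y t ht hty
      have hyx : |y| < x₁ := by nlinarith [abs_nonneg y]
      have hMg : (x₁ - |y|) / x₁ ≤ max (1 - y ^ 2 / x₁ ^ 2) 0 := by
        refine le_trans ?_ (le_max_left _ _)
        rw [div_le_iff₀ hx₁,
          show (1 - y ^ 2 / x₁ ^ 2) * x₁ = (x₁ ^ 2 - y ^ 2) / x₁ by field_simp,
          le_div_iff₀ hx₁]
        nlinarith [sq_abs y, abs_nonneg y]
      have hc2 : (t / x₁) ^ 2 ≤ ((x₁ - |y|) / x₁) ^ 2 := by gcongr
      have hc3 : ((x₁ - |y|) / x₁) ^ 2 ≤ (max (1 - y ^ 2 / x₁ ^ 2) 0) ^ 2 :=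
        pow_le_pow_left₀ (div_nonneg (by linarith) hx₁.le) hMg 2
      rw [hψ]
      calc t ^ 2 / x₁ ^ 2 = (t / x₁) ^ 2 := by rw [div_pow]
        _ ≤ ((x₁ - |y|) / x₁) ^ 2 := hc2
        _ ≤ _ := hc3
    -- integral over the window
    have hIoo : ε ^ 3 / (3 * x₁ ^ 2) ≤ ∫ y in Set.Ioo (x - ε) (x + ε), ψ₀ y := by
      have hψint : IntegrableOn ψ₀ (Set.Ioo (x - ε) (x + ε)) :=
        (hψc.integrableOn_Icc).mono_set Set.Ioo_subset_Icc_self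
      rcases le_or_gt x' x with hix | hix
      · -- interval to the left of x, right of x'
        have hsub : Set.Ioo x' (x' + ε) ⊆ Set.Ioo (x - ε) (x + ε) := by
          have hmin : x - ε ≤ min x (x₁ - ε) := le_min (by linarith) (by linarith)
          have h1 : x - ε ≤ x' := le_trans hmin (le_max_left _ _)
          intro y hy
          exact ⟨lt_of_le_of_lt h1 hy.1, lt_of_lt_of_le hy.2 (by linarith)⟩
        have hpt : ∀ y ∈ Set.Ioo x' (x' + ε),
            (x' + ε - y) ^ 2 / x₁ ^ 2 ≤ ψ₀ y := by
          intro y hy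
          apply hpsilb y _ (by linarith [hy.2])
          rcases le_or_gt 0 y with hy0 | hy0
          · rw [abs_of_nonneg hy0]; linarith [hy.1]
          · rw [abs_of_neg hy0]; linarith [hy.1]
        have hmono : ∫ y in Set.Ioo x' (x' + ε), (x' + ε - y) ^ 2 / x₁ ^ 2
            ≤ ∫ y in Set.Ioo x' (x' + ε), ψ₀ y := by
          apply setIntegral_mono_on ?_ (hψint.mono_set hsub) measurableSet_Ioo hpt
          exact (((continuous_const.sub continuous_id).pow 2).div_const
            _).integrableOn_Icc.mono_set Set.Ioo_subset_Icc_self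
        have hlast : ∫ y in Set.Ioo x' (x' + ε), ψ₀ y
            ≤ ∫ y in Set.Ioo (x - ε) (x + ε), ψ₀ y := by
          apply setIntegral_mono_set hψint
          · filter_upwards with y using hψ0 y
          · exact Filter.Eventually.of_forall hsub
        calc ε ^ 3 / (3 * x₁ ^ 2)
            = ∫ y in Set.Ioo x' (x' + ε), (x' + ε - y) ^ 2 / x₁ ^ 2 :=
              (integral_bump_right x' ε x₁ hε).symm
          _ ≤ ∫ y in Set.Ioo x' (x' + ε), ψ₀ y := hmono
          _ ≤ _ := hlast
      · -- x < x' forces x' = ε - x₁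
        have hx'eq : x' = ε - x₁ := by
          rcases max_cases (min x (x₁ - ε)) (ε - x₁) with ⟨he, _⟩ | ⟨he, _⟩
          · exfalso
            have h1 : min x (x₁ - ε) ≤ x := min_le_left _ _
            rw [hx'def] at hix
            linarith [he ▸ hix]
          · rw [hx'def, he]
        have hsub : Set.Ioo (x' - ε) x' ⊆ Set.Ioo (x - ε) (x + ε) := by
          intro y hy
          constructor
          · have : x - ε ≤ x' - ε := by linarith [hix.le]
            exact lt_of_le_of_lt this hy.1
          · have : x' ≤ x + ε := by rw [hx'eq]; linarith
            exact lt_of_lt_of_le hy.2 this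
        have hpt : ∀ y ∈ Set.Ioo (x' - ε) x',
            (y - (x' - ε)) ^ 2 / x₁ ^ 2 ≤ ψ₀ y := by
          intro y hy
          apply hpsilb y _ (by linarith [hy.1])
          rcases le_or_gt 0 y with hy0 | hy0
          · exfalso
            have : y < x' := hy.2
            rw [hx'eq] at this
            linarith
          · rw [abs_of_neg hy0]
            rw [hx'eq] at hy ⊢
            linarith [hy.2]
        have hmono : ∫ y in Set.Ioo (x' - ε) x', (y - (x' - ε)) ^ 2 / x₁ ^ 2
            ≤ ∫ y in Set.Ioo (x' - ε) x', ψ₀ y := by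
          apply setIntegral_mono_on ?_ (hψint.mono_set hsub) measurableSet_Ioo hpt
          exact (((continuous_id.sub continuous_const).pow 2).div_const
            _).integrableOn_Icc.mono_set Set.Ioo_subset_Icc_self
        have hlast : ∫ y in Set.Ioo (x' - ε) x', ψ₀ y
            ≤ ∫ y in Set.Ioo (x - ε) (x + ε), ψ₀ y := by
          apply setIntegral_mono_set hψint
          · filter_upwards with y using hψ0 y
          · exact Filter.Eventually.of_forall hsub
        calc ε ^ 3 / (3 * x₁ ^ 2)
            = ∫ y in Set.Ioo (x' - ε) x', (y - (x' - ε)) ^ 2 / x₁ ^ 2 :=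
              (integral_bump_left x' ε x₁ hε).symm
          _ ≤ ∫ y in Set.Ioo (x' - ε) x', ψ₀ y := hmono
          _ ≤ _ := hlast
    -- from window integral to kernel integral
    have hstep3 : κ₀ * ∫ y in Set.Ioo (x - ε) (x + ε), ψ₀ y ≤ ∫ y, ψ₀ y * m x y := by
      rw [← integral_indicator measurableSet_Ioo, ← integral_const_mul]
      apply integral_mono_of_nonneg ?_ hint
      · filter_upwards with y
        by_cases hy : y ∈ Set.Ioo (x - ε) (x + ε)
        · rw [Set.indicator_of_mem hy]
          have hlb := hmlb x y
          rw [Set.indicator_of_mem hy] at hlb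
          calc κ₀ * ψ₀ y = ψ₀ y * κ₀ := by ring
            _ ≤ ψ₀ y * m x y :=
              mul_le_mul_of_nonneg_left (by linarith) (hψ0 y)
        · rw [Set.indicator_of_notMem hy, mul_zero]
          exact mul_nonneg (hψ0 y) (hm0 x y)
      · filter_upwards with y
        exact mul_nonneg hκ.le (Set.indicator_nonneg (fun z _ => hψ0 z) y)
    have hkey : κ₀ * (ε ^ 3 / (3 * x₁ ^ 2)) ≤ ∫ y, ψ₀ y * m x y :=
      le_trans (mul_le_mul_of_nonneg_left hIoo hκ.le) hstep3
    -- conclude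
    have hcondd : 4 * ρ / x₁ ≤ γ * (κ₀ * (ε ^ 3 / (3 * x₁ ^ 2))) := by
      rw [show γ * (κ₀ * (ε ^ 3 / (3 * x₁ ^ 2))) = γ * κ₀ * ε ^ 3 / (3 * x₁ ^ 2) by ring,
        div_le_div_iff₀ hx₁ (by positivity)]
      nlinarith [mul_le_mul_of_nonneg_right hcond hx₁.le]
    have hγA : γ * (κ₀ * (ε ^ 3 / (3 * x₁ ^ 2))) ≤ γ * ∫ y, ψ₀ y * m x y :=
      mul_le_mul_of_nonneg_left hkey hγ.le
    have hhx' : γ * ψ₀ x + β₀ * ψ₀ x ≤ h x * ψ₀ x := by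
      nlinarith [mul_le_mul_of_nonneg_right (show γ + β₀ ≤ h x by linarith) (hψ0 x)]
    rw [hsplit, mul_sub]
    linarith [hDb, hγA, hcondd, hhx']
end

section
/- Let 0 < δ ≤ 1 and c ∈ [−1,1]. Then ∫_{max(c−δ,−1)}^{min(c+δ,1)} (1 − z²)² dz ≥ ∫_{1−δ}^{1} (1 − z²)² dz. -/
noncomputable def Pquint (x : ℝ) : ℝ := x - 2/3*x^3 + 1/5*x^5

lemma hasDerivPquint (x : ℝ) : HasDerivAt Pquint ((1 - x^2)^2) x := by
  have h : HasDerivAt (fun x : ℝ => x - 2/3*x^3 + 1/5*x^5)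
      (1 - 2/3*(↑3*x^2) + 1/5*(↑5*x^4)) x := by
    exact ((hasDerivAt_id x).sub ((hasDerivAt_pow 3 x).const_mul (2/3 : ℝ))).add
      ((hasDerivAt_pow 5 x).const_mul (1/5 : ℝ))
  convert h using 1
  · rfl
  ring

lemma Pquint_mono : Monotone Pquint :=
  monotone_of_deriv_nonneg (fun x => (hasDerivPquint x).differentiableAt)
    (fun x => by rw [(hasDerivPquint x).deriv]; positivity)

lemma key (a b : ℝ) : (∫ z in a..b, (1 - z ^ 2) ^ 2) = Pquint b - Pquint a := by
  apply intervalIntegral.integral_eq_sub_of_hasDerivAt (fun x _ => hasDerivPquint x)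
  apply Continuous.intervalIntegrable
  continuity

lemma Pquint_neg (x : ℝ) : Pquint (-x) = - Pquint x := by simp [Pquint]; ring

/-- For `0 < δ ≤ 1` and `c ∈ [−1,1]`, the integral of `(1 − z²)²` over the window
`(c−δ, c+δ) ∩ (−1, 1)` is at least the integral of `(1 − z²)²` over `(1−δ, 1)`:
the worst case for the window is when its center sits at the boundary of `(−1,1)`. -/
theorem window_integral_ge_edge (δ c : ℝ) (hδ0 : 0 < δ) (hδ1 : δ ≤ 1)
    (hc : c ∈ Set.Icc (-1 : ℝ) 1) :
    (∫ z in (1 - δ)..1, (1 - z ^ 2) ^ 2)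
      ≤ ∫ z in (max (c - δ) (-1))..(min (c + δ) 1), (1 - z ^ 2) ^ 2 := by
  obtain ⟨hc1, hc2⟩ := hc
  have hP1 : Pquint (-1) = - Pquint 1 := Pquint_neg 1
  rw [key, key]
  rcases le_total (c - δ) (-1) with h1 | h1 <;> rcases le_total 1 (c + δ) with h2 | h2
  · rw [max_eq_right h1, min_eq_right h2]
    have := Pquint_mono (show (-1:ℝ) ≤ 1 - δ by linarith)
    linarith
  · rw [max_eq_right h1, min_eq_left h2]
    have := Pquint_mono (show δ - 1 ≤ c + δ by linarith)
    have heq : Pquint (δ - 1) = - Pquint (1 - δ) := by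
      rw [show δ - 1 = -(1-δ) by ring, Pquint_neg]
    linarith
  · rw [max_eq_left h1, min_eq_right h2]
    have := Pquint_mono (show c - δ ≤ 1 - δ by linarith)
    linarith
  · rw [max_eq_left h1, min_eq_left h2]
    have hA : 0 ≤ (1-δ)^2 - c^2 := by nlinarith
    have hQ : (0:ℝ) ≤ 28/3 - 15*δ + 31/5*δ^2 := by nlinarith [sq_nonneg (62*δ - 75)]
    have hE : 0 ≤ 2 - 4*c^2 + 2*c^4 - 8/3*δ^2 + 4*c^2*δ^2 + δ^3 + 1/5*δ^4 := by
      nlinarith [mul_nonneg (sq_nonneg δ) hQ, sq_nonneg ((1-δ)^2 - c^2),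
        mul_nonneg (mul_nonneg hA hδ0.le) (show (0:ℝ) ≤ 1 - δ by linarith)]
    simp only [Pquint]
    nlinarith [mul_nonneg hδ0.le hE]
end

section
/- Let q ≥ 1 be an integer, γ > 0, ρ ∈ ℝ, c ∈ ℝ and x₀ > 0. Let m : ℝ × ℝ → [0,∞) be measurable with ∫_ℝ m(x,y) dy = 1 for every x ∈ ℝ and m_{2q} := sup_{x∈ℝ} ∫_ℝ y^{2q} m(x,y) dy < ∞. Let h : ℝ → ℝ be continuous with h(x) ≤ c for all x and h(x) ≤ −|x|^q for all |x| ≥ x₀. Let λ > 0 and let F : ℝ → [0,∞) be Lebesgue integrable with ∫_ℝ |h(x)| F(x) dx < ∞, and suppose that for every continuously differentiable φ : ℝ → ℝ with φ and φ' bounded: λ ∫_ℝ φ(x) F(x) dx = ∫_ℝ (Lφ(x) + h(x)φ(x)) F(x) dx, where Lφ(x) = ρ φ'(x) + γ ∫_ℝ (φ(y) − φ(x)) m(x,y) dy. Then ∫_ℝ x^{2q} F(x) dx < ∞. -/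
open MeasureTheory Filter
open scoped ENNReal Topology

lemma P_hasDerivAt (n : ℕ) (hn : Even n) (R : ℝ) (hR : 0 < R) (x : ℝ) :
    HasDerivAt (fun x : ℝ => x ^ n / (1 + x ^ n / R))
      ((n : ℝ) * x ^ (n - 1) / (1 + x ^ n / R) ^ 2) x := by
  have hxn : (0:ℝ) ≤ x ^ n := hn.pow_nonneg x
  have hd : (0:ℝ) < 1 + x ^ n / R := by positivity
  have h1 := hasDerivAt_pow n x
  have h2 : HasDerivAt (fun x : ℝ => 1 + x ^ n / R) ((n : ℝ) * x ^ (n-1) / R) x :=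
    (h1.div_const R).const_add 1
  have := h1.div h2 hd.ne'
  refine this.congr_deriv ?_
  field_simp [hR.ne', hd.ne']
  ring

lemma aux_mul_lb {a b e f : ℝ} (he : 0 ≤ e) (ha : -e ≤ a) (hb : 0 ≤ b) (hbf : b ≤ f) :
    -(e * f) ≤ a * b := by
  rcases le_or_gt 0 a with h | h
  · nlinarith
  · nlinarith

set_option maxHeartbeats 4000000

/-- If `F ≥ 0` is an integrable weak eigenfunction, with eigenvalue `λ > 0`, of the
operator `L* + h` (formulated in duality against `C¹` test functions bounded together
with their derivative, via the generator `Lφ(x) = ρφ'(x) + γ∫(φ(y)−φ(x))m(x,y)dy`),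
where `h` is continuous, bounded above by `c`, and `h(x) ≤ −|x|^q` for `|x| ≥ x₀`,
and the kernel `m` has uniformly bounded `2q`-th moments, then `F` has a finite moment
of order `2q`: `∫ x^{2q} F(x) dx < ∞`. -/
theorem stationary_density_moment (q : ℕ) (hq : 1 ≤ q) (γ ρ c x₀ : ℝ)
    (hγ : 0 < γ) (hx₀ : 0 < x₀)
    (m : ℝ → ℝ → ℝ) (hm : Measurable (Function.uncurry m)) (hm0 : ∀ x y, 0 ≤ m x y)
    (hm1 : ∀ x, (∫ y, m x y) = 1)
    (hm2q : ∃ B : ℝ≥0∞, B < ⊤ ∧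
      ∀ x, (∫⁻ y, ENNReal.ofReal (y ^ (2 * q) * m x y)) ≤ B)
    (h : ℝ → ℝ) (hh : Continuous h) (hhc : ∀ x, h x ≤ c)
    (hhq : ∀ x, x₀ ≤ |x| → h x ≤ -|x| ^ q)
    (lam : ℝ) (hlam : 0 < lam)
    (F : ℝ → ℝ) (hF0 : ∀ x, 0 ≤ F x) (hFi : Integrable F)
    (hhF : Integrable (fun x => |h x| * F x))
    (heig : ∀ φ : ℝ → ℝ, ContDiff ℝ 1 φ →
      (∃ C, ∀ x, |φ x| ≤ C ∧ |deriv φ x| ≤ C) →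
      lam * ∫ x, φ x * F x
        = ∫ x, (ρ * deriv φ x + γ * (∫ y, (φ y - φ x) * m x y) + h x * φ x) * F x) :
    Integrable (fun x => x ^ (2 * q) * F x) := by
  obtain ⟨B, hBlt, hB⟩ := hm2q
  set n := 2 * q with hndef
  have hne : Even n := even_two_mul q
  have hn1 : 1 ≤ n := by omega
  have hxnn : ∀ x : ℝ, (0:ℝ) ≤ x ^ n := fun x => hne.pow_nonneg x
  have habs : ∀ x : ℝ, |x| ^ n = x ^ n := fun x => hne.pow_abs x
  -- constants
  set M : ℝ := max x₀ 1 + 2 * n * (|ρ| + 1) with hMdef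
  have hM1 : (1:ℝ) ≤ M := by
    have : (0:ℝ) ≤ 2 * n * (|ρ| + 1) := by positivity
    have := le_max_right x₀ 1
    simp only [hMdef]; linarith
  have hMx₀ : x₀ ≤ M := by
    have : (0:ℝ) ≤ 2 * n * (|ρ| + 1) := by positivity
    have := le_max_left x₀ 1
    simp only [hMdef]; linarith
  have hM0 : (0:ℝ) ≤ M := by linarith
  have hMkey : 2 * n * (|ρ| + 1) ≤ M ^ (q + 1) := by
    have h1 : M ≤ M ^ (q + 1) := le_self_pow₀ hM1 (by omega)
    have : (0:ℝ) ≤ max x₀ 1 := le_trans zero_le_one (le_max_right x₀ 1)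
    simp only [hMdef] at h1 ⊢; linarith
  set D : ℝ := n * M ^ (n - 1) with hDdef
  have hD0 : 0 ≤ D := by positivity
  set NF : ℝ := ∫ x, F x with hNFdef
  have hNF0 : 0 ≤ NF := integral_nonneg hF0
  set A0 : ℝ := (|ρ| * D + (1/2) * |c| * M ^ n + γ * B.toReal) * NF with hA0def
  set C₁ : ℝ := (2 * A0 + (x₀ ^ q + |c|) * x₀ ^ n * NF) / x₀ ^ q with hC₁def
  have hFm : AEStronglyMeasurable F volume := hFi.aestronglyMeasurable
  have hmx : ∀ x, Measurable (m x) := fun x => hm.of_uncurry_left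
  have hmint : ∀ x, Integrable (m x) := by
    intro x
    by_contra hc
    have h1 := hm1 x
    rw [integral_undef hc] at h1
    exact one_ne_zero h1.symm
  have ihF : Integrable (fun x => h x * F x) := by
    refine hhF.mono' (hh.aestronglyMeasurable.mul hFm) (ae_of_all _ fun x => ?_)
    rw [Real.norm_eq_abs, abs_mul, abs_of_nonneg (hF0 x)]
  -- main estimate, uniform in R
  have key : ∀ R : ℝ, 0 < R →
      Integrable (fun x => x ^ n / (1 + x ^ n / R) * F x) ∧
      (∫ x, x ^ n / (1 + x ^ n / R) * F x) ≤ C₁ := by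
    intro R hR
    set P : ℝ → ℝ := fun x => x ^ n / (1 + x ^ n / R) with hPdef
    have hdpos : ∀ x : ℝ, 0 < 1 + x ^ n / R := fun x => by
      have := hxnn x; positivity
    have hd1 : ∀ x : ℝ, 1 ≤ 1 + x ^ n / R := fun x => by
      have := hxnn x; have := hR; nlinarith [div_nonneg (hxnn x) hR.le]
    have hP0 : ∀ x, 0 ≤ P x := fun x => div_nonneg (hxnn x) (hdpos x).le
    have hPle : ∀ x, P x ≤ x ^ n := fun x => div_le_self (hxnn x) (hd1 x)
    have hPleR : ∀ x, P x ≤ R := by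
      intro x
      rw [hPdef]
      rw [div_le_iff₀ (hdpos x)]
      have h1 : R * (1 + x ^ n / R) = R + x ^ n := by field_simp
      rw [h1]; linarith [hR]
    set P' : ℝ → ℝ := fun x => (n : ℝ) * x ^ (n - 1) / (1 + x ^ n / R) ^ 2 with hP'def
    have hPd : ∀ x, HasDerivAt P (P' x) x := fun x => P_hasDerivAt n hne R hR x
    have hderiv : deriv P = P' := funext fun x => (hPd x).deriv
    have hdcont : Continuous (fun x : ℝ => 1 + x ^ n / R) :=
      continuous_const.add ((continuous_pow n).div_const R)
    have hPcont : Continuous P :=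
      (continuous_pow n).div hdcont (fun x => (hdpos x).ne')
    have hP'cont : Continuous P' :=
      (continuous_const.mul (continuous_pow (n-1))).div (hdcont.pow 2)
        (fun x => pow_ne_zero 2 (hdpos x).ne')
    have hPc1 : ContDiff ℝ 1 P := by
      apply ContDiff.div
      · exact contDiff_id.pow n
      · exact contDiff_const.add ((contDiff_id.pow n).div_const R)
      · exact fun x => (hdpos x).ne'
    have hP'absEq : ∀ x, |P' x| = (n : ℝ) * |x| ^ (n - 1) / (1 + x ^ n / R) ^ 2 := by
      intro x
      rw [hP'def, abs_div, abs_mul, abs_pow, abs_of_pos (pow_pos (hdpos x) 2),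
        Nat.abs_cast]
    have hP'abs : ∀ x, |P' x| ≤ (n : ℝ) * |x| ^ (n - 1) := by
      intro x
      rw [hP'absEq x]
      apply div_le_self (by positivity)
      nlinarith [hd1 x, hdpos x]
    have hxpow : ∀ x : ℝ, |x| ^ (n - 1) ≤ 1 + x ^ n := by
      intro x
      rcases le_or_gt (|x|) 1 with hx | hx
      · have := pow_le_one₀ (n := n - 1) (abs_nonneg x) hx
        linarith [hxnn x]
      · have h1 : |x| ^ (n - 1) ≤ |x| ^ n := pow_le_pow_right₀ hx.le (by omega)
        rw [habs x] at h1; linarith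
    have hP'bdd : ∀ x, |P' x| ≤ (n : ℝ) * (R + 1) := by
      intro x
      rw [hP'absEq x]
      rw [div_le_iff₀ (pow_pos (hdpos x) 2)]
      have h1 := hxpow x
      have h2 := hxnn x
      have h3 : (0:ℝ) ≤ (n:ℝ) := Nat.cast_nonneg n
      have ht : (0:ℝ) ≤ x ^ n / R := div_nonneg h2 hR.le
      have hs : x ^ n = R * (x ^ n / R) := by field_simp
      have hsc : 1 + x ^ n ≤ (R + 1) * (1 + x ^ n / R) ^ 2 := by
        nlinarith [sq_nonneg (x ^ n / R)]
      calc (n:ℝ) * |x| ^ (n-1) ≤ (n:ℝ) * ((R + 1) * (1 + x ^ n / R) ^ 2) :=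
            mul_le_mul_of_nonneg_left (h1.trans hsc) h3
        _ = (n:ℝ) * (R + 1) * (1 + x ^ n / R) ^ 2 := by ring
    -- kernel integral facts
    have imxP : ∀ x, Integrable (fun y => P y * m x y) := fun x =>
      (hmint x).bdd_mul hPcont.aestronglyMeasurable
        (c := R) (ae_of_all _ fun y => by rw [Real.norm_eq_abs, abs_of_nonneg (hP0 y)]; exact hPleR y)
    set K : ℝ → ℝ := fun x => ∫ y, P y * m x y with hKdef
    have hK0 : ∀ x, 0 ≤ K x := fun x =>
      integral_nonneg fun y => mul_nonneg (hP0 y) (hm0 x y)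
    have hKle : ∀ x, K x ≤ B.toReal := by
      intro x
      have h1 : ENNReal.ofReal (K x) = ∫⁻ y, ENNReal.ofReal (P y * m x y) :=
        ofReal_integral_eq_lintegral_ofReal (imxP x)
          (ae_of_all _ fun y => mul_nonneg (hP0 y) (hm0 x y))
      have h2 : (∫⁻ y, ENNReal.ofReal (P y * m x y)) ≤
          ∫⁻ y, ENNReal.ofReal (y ^ n * m x y) :=
        lintegral_mono fun y =>
          ENNReal.ofReal_le_ofReal (mul_le_mul_of_nonneg_right (hPle y) (hm0 x y))
      have h4 : ENNReal.ofReal (K x) ≤ B := by rw [h1]; exact h2.trans (hB x)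
      calc K x = (ENNReal.ofReal (K x)).toReal := (ENNReal.toReal_ofReal (hK0 x)).symm
        _ ≤ B.toReal := ENNReal.toReal_mono hBlt.ne h4
    have hKsm : StronglyMeasurable K := by
      have hf : StronglyMeasurable (fun p : ℝ × ℝ => P p.2 * m p.1 p.2) := by
        apply Measurable.stronglyMeasurable
        exact (hPcont.measurable.comp measurable_snd).mul hm
      exact hf.integral_prod_right'
    -- integrabilities
    have iPF : Integrable (fun x => P x * F x) :=
      hFi.bdd_mul hPcont.aestronglyMeasurable
        (c := R) (ae_of_all _ fun x => by rw [Real.norm_eq_abs, abs_of_nonneg (hP0 x)]; exact hPleR x)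
    have iP'F : Integrable (fun x => P' x * F x) :=
      hFi.bdd_mul hP'cont.aestronglyMeasurable
        (c := (n : ℝ) * (R + 1)) (ae_of_all _ fun x => by rw [Real.norm_eq_abs]; exact hP'bdd x)
    have i3 : Integrable (fun x => P x * (h x * F x)) :=
      ihF.bdd_mul hPcont.aestronglyMeasurable
        (c := R) (ae_of_all _ fun x => by rw [Real.norm_eq_abs, abs_of_nonneg (hP0 x)]; exact hPleR x)
    have iKF : Integrable (fun x => K x * F x) :=
      hFi.bdd_mul hKsm.aestronglyMeasurable
        (c := B.toReal) (ae_of_all _ fun x => by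
          rw [Real.norm_eq_abs, abs_of_nonneg (hK0 x)]; exact hKle x)
    have iI : Integrable (fun x => (-h x) * (P x * F x)) :=
      (i3.const_mul (-1)).congr (ae_of_all _ fun x => by ring)
    -- inner integral identity
    have hinner : ∀ x, (∫ y, (P y - P x) * m x y) = K x - P x := by
      intro x
      have e : (fun y => (P y - P x) * m x y)
          = fun y => P y * m x y - P x * m x y := by funext y; ring
      rw [e, integral_sub (imxP x) ((hmint x).const_mul (P x)),
        integral_const_mul, hm1 x, mul_one]
    -- apply the eigenvalue identity
    have heq := heig P hPc1 ⟨R + (n : ℝ) * (R + 1), fun x => by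
      constructor
      · rw [abs_of_nonneg (hP0 x)]
        have : (0:ℝ) ≤ (n : ℝ) * (R + 1) := by positivity
        linarith [hPleR x]
      · rw [hderiv]
        linarith [hP'bdd x, hR]⟩
    rw [hderiv] at heq
    have hsplit : (fun x => (ρ * P' x + γ * (∫ y, (P y - P x) * m x y) + h x * P x) * F x)
        = fun x => ρ * (P' x * F x) + γ * (K x * F x - P x * F x) + P x * (h x * F x) := by
      funext x; rw [hinner x]; ring
    rw [hsplit] at heq
    have iA : Integrable (fun x => ρ * (P' x * F x)) := iP'F.const_mul ρ
    have iB0 : Integrable (fun x => K x * F x - P x * F x) := iKF.sub iPF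
    have iB : Integrable (fun x => γ * (K x * F x - P x * F x)) := iB0.const_mul γ
    have iAB : Integrable (fun x => ρ * (P' x * F x) + γ * (K x * F x - P x * F x)) :=
      iA.add iB
    rw [integral_add iAB i3, integral_add iA iB,
      integral_const_mul, integral_const_mul, integral_sub iKF iPF] at heq
    -- notation
    set S : ℝ := ∫ x, P x * F x with hSdef
    set A1 : ℝ := ∫ x, P' x * F x with hA1def
    set A2 : ℝ := ∫ x, K x * F x with hA2def
    set A3 : ℝ := ∫ x, P x * (h x * F x) with hA3def
    set I : ℝ := ∫ x, (-h x) * (P x * F x) with hIdef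
    have hIA3 : I = -A3 := by
      rw [hIdef, hA3def, ← integral_neg]
      congr 1; funext x; ring
    have hS0 : 0 ≤ S := integral_nonneg fun x => mul_nonneg (hP0 x) (hF0 x)
    have hA2b : A2 ≤ B.toReal * NF := by
      rw [hA2def, hNFdef, ← integral_const_mul]
      exact integral_mono iKF (hFi.const_mul _)
        (fun x => mul_le_mul_of_nonneg_right (hKle x) (hF0 x))
    -- pointwise derivative bound
    have hptw : ∀ x, ρ * (P' x * F x) ≤
        |ρ| * D * F x + ((1/2) * ((-h x) * (P x * F x)) + ((1/2) * |c| * M ^ n) * F x) := by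
      intro x
      have h0 : ρ * (P' x * F x) ≤ |ρ| * |P' x| * F x := by
        have h0' : ρ * P' x ≤ |ρ| * |P' x| := by
          rw [← abs_mul]; exact le_abs_self _
        calc ρ * (P' x * F x) = (ρ * P' x) * F x := by ring
          _ ≤ (|ρ| * |P' x|) * F x := mul_le_mul_of_nonneg_right h0' (hF0 x)
          _ = |ρ| * |P' x| * F x := by ring
      have hmc : -|c| ≤ -h x := by
        have := hhc x; have := le_abs_self c; linarith
      rcases le_or_gt (|x|) M with hxM | hxM
      · -- small x
        have h1 : |P' x| ≤ D := by
          refine (hP'abs x).trans ?_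
          rw [hDdef]
          exact mul_le_mul_of_nonneg_left
            (pow_le_pow_left₀ (abs_nonneg x) hxM (n - 1)) (Nat.cast_nonneg n)
        have h2 : |ρ| * |P' x| * F x ≤ |ρ| * D * F x := by
          have := mul_le_mul_of_nonneg_left h1 (abs_nonneg ρ)
          exact mul_le_mul_of_nonneg_right this (hF0 x)
        have h3 : P x * F x ≤ M ^ n * F x := by
          refine mul_le_mul_of_nonneg_right ?_ (hF0 x)
          calc P x ≤ x ^ n := hPle x
            _ = |x| ^ n := (habs x).symm
            _ ≤ M ^ n := pow_le_pow_left₀ (abs_nonneg x) hxM n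
        have h4 : -(|c| * (M ^ n * F x)) ≤ (-h x) * (P x * F x) :=
          aux_mul_lb (abs_nonneg c) hmc (mul_nonneg (hP0 x) (hF0 x)) h3
        linarith [h0, h2, h4]
      · -- large x
        have hx1 : (1:ℝ) ≤ |x| := hM1.trans hxM.le
        have hxq1 : 2 * n * (|ρ| + 1) ≤ |x| ^ (q + 1) := by
          calc 2 * n * (|ρ| + 1) ≤ M ^ (q + 1) := hMkey
            _ ≤ |x| ^ (q + 1) := pow_le_pow_left₀ hM0 hxM.le (q + 1)
        have hnum : |ρ| * ((n:ℝ) * |x| ^ (n - 1)) ≤ (1/2) * (|x| ^ q * x ^ n) := by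
          have e1 : |x| ^ q * x ^ n = |x| ^ (n - 1) * |x| ^ (q + 1) := by
            rw [← habs x, ← pow_add, ← pow_add]
            congr 1; omega
          rw [e1]
          have h5 : |ρ| * (n:ℝ) ≤ (1/2) * (2 * n * (|ρ| + 1)) := by
            have : (0:ℝ) ≤ (n:ℝ) := Nat.cast_nonneg n
            nlinarith [abs_nonneg ρ]
          have h6 : (1/2) * (2 * n * (|ρ| + 1)) * |x| ^ (n-1) ≤
              (1/2) * (|x| ^ (q+1)) * |x| ^ (n-1) := by
            have := pow_nonneg (abs_nonneg x) (n-1)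
            nlinarith [hxq1]
          calc |ρ| * ((n:ℝ) * |x| ^ (n-1)) = (|ρ| * (n:ℝ)) * |x| ^ (n-1) := by ring
            _ ≤ (1/2) * (2 * n * (|ρ| + 1)) * |x| ^ (n-1) :=
              mul_le_mul_of_nonneg_right h5 (pow_nonneg (abs_nonneg x) (n-1))
            _ ≤ (1/2) * (|x| ^ (q+1)) * |x| ^ (n-1) := h6
            _ = |x| ^ (n-1) * |x| ^ (q+1) * (1/2) := by ring
            _ = (1/2) * (|x| ^ (n-1) * |x| ^ (q+1)) := by ring
        have hd := hdpos x
        have hdd : 1 + x ^ n / R ≤ (1 + x ^ n / R) ^ 2 := by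
          nlinarith [hd1 x]
        have h7 : |ρ| * |P' x| ≤ (1/2) * (|x| ^ q * P x) := by
          rw [hP'absEq x]
          have e2 : |ρ| * ((n:ℝ) * |x| ^ (n-1) / (1 + x^n/R)^2)
              = (|ρ| * ((n:ℝ) * |x| ^ (n-1))) / (1 + x^n/R)^2 := by ring
          rw [e2]
          have step1 : (|ρ| * ((n:ℝ) * |x| ^ (n-1))) / (1 + x^n/R)^2 ≤
              ((1/2) * (|x| ^ q * x ^ n)) / (1 + x^n/R)^2 := by
            gcongr
          refine step1.trans ?_
          have e3 : ((1/2) * (|x| ^ q * x ^ n)) / (1 + x^n/R)^2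
              = (1/2) * |x| ^ q * (x ^ n / (1 + x^n/R)^2) := by ring
          have e4 : (1/2) * (|x| ^ q * P x) = (1/2) * |x| ^ q * (x ^ n / (1 + x^n/R)) := by
            rw [hPdef]; ring
          rw [e3, e4]
          gcongr
          exact hxnn x
        have h8 : |x| ^ q ≤ -h x := by
          have := hhq x (hMx₀.trans hxM.le); linarith
        have h9 : (1/2) * (|x| ^ q * P x) * F x ≤ (1/2) * ((-h x) * (P x * F x)) := by
          have : |x| ^ q * P x ≤ (-h x) * P x :=
            mul_le_mul_of_nonneg_right h8 (hP0 x)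
          nlinarith [hF0 x]
        have h10 : |ρ| * |P' x| * F x ≤ (1/2) * (|x| ^ q * P x) * F x :=
          mul_le_mul_of_nonneg_right h7 (hF0 x)
        have h11 : (0:ℝ) ≤ |ρ| * D * F x :=
          mul_nonneg (mul_nonneg (abs_nonneg ρ) hD0) (hF0 x)
        have h12 : (0:ℝ) ≤ ((1/2) * |c| * M ^ n) * F x := by
          have hMn : (0:ℝ) ≤ M ^ n := pow_nonneg hM0 n
          exact mul_nonneg (by positivity) (hF0 x)
        linarith [h0, h10, h9]
    -- integrate the pointwise bound
    have hρA1 : ρ * A1 ≤ |ρ| * D * NF + ((1/2) * I + ((1/2) * |c| * M ^ n) * NF) := by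
      have iC1 : Integrable (fun x => |ρ| * D * F x) := hFi.const_mul (|ρ| * D)
      have iC2 : Integrable (fun x => (1/2) * ((-h x) * (P x * F x))) := iI.const_mul (1/2)
      have iC3 : Integrable (fun x => ((1/2) * |c| * M ^ n) * F x) :=
        hFi.const_mul ((1/2) * |c| * M ^ n)
      have iC23 : Integrable
          (fun x => (1/2) * ((-h x) * (P x * F x)) + ((1/2) * |c| * M ^ n) * F x) :=
        iC2.add iC3
      have h1 : (∫ x, ρ * (P' x * F x)) ≤
          ∫ x, (|ρ| * D * F x + ((1/2) * ((-h x) * (P x * F x)) + ((1/2) * |c| * M ^ n) * F x)) :=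
        integral_mono (iP'F.const_mul ρ) (iC1.add iC23) hptw
      rw [integral_add iC1 iC23, integral_add iC2 iC3,
        integral_const_mul, integral_const_mul, integral_const_mul,
        integral_const_mul] at h1
      exact h1
    have hIle : I ≤ 2 * A0 := by
      have e1 : I = -(lam * S) - γ * S + ρ * A1 + γ * A2 := by
        rw [hIA3]; linarith [heq]
      have e2 : γ * A2 ≤ γ * (B.toReal * NF) :=
        mul_le_mul_of_nonneg_left hA2b hγ.le
      have e3 : 0 ≤ lam * S := mul_nonneg hlam.le hS0
      have e4 : 0 ≤ γ * S := mul_nonneg hγ.le hS0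
      rw [hA0def]
      nlinarith [hρA1]
    -- lower bound on I in terms of S
    have hptw2 : ∀ x, x₀ ^ q * (P x * F x) ≤
        (-h x) * (P x * F x) + ((x₀ ^ q + |c|) * x₀ ^ n) * F x := by
      intro x
      have hmc : -|c| ≤ -h x := by
        have := hhc x; have := le_abs_self c; linarith
      rcases le_or_gt x₀ (|x|) with hx | hx
      · have h8 : x₀ ^ q ≤ -h x := by
          have h8' := hhq x hx
          have : x₀ ^ q ≤ |x| ^ q := pow_le_pow_left₀ hx₀.le hx q
          linarith
        have h9 : x₀ ^ q * (P x * F x) ≤ (-h x) * (P x * F x) :=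
          mul_le_mul_of_nonneg_right h8 (mul_nonneg (hP0 x) (hF0 x))
        have h10 : (0:ℝ) ≤ ((x₀ ^ q + |c|) * x₀ ^ n) * F x := by
          have : (0:ℝ) ≤ (x₀ ^ q + |c|) * x₀ ^ n := by positivity
          exact mul_nonneg this (hF0 x)
        linarith
      · have h3 : P x * F x ≤ x₀ ^ n * F x := by
          refine mul_le_mul_of_nonneg_right ?_ (hF0 x)
          calc P x ≤ x ^ n := hPle x
            _ = |x| ^ n := (habs x).symm
            _ ≤ x₀ ^ n := pow_le_pow_left₀ (abs_nonneg x) hx.le n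
        have h4 : -(|c| * (x₀ ^ n * F x)) ≤ (-h x) * (P x * F x) :=
          aux_mul_lb (abs_nonneg c) hmc (mul_nonneg (hP0 x) (hF0 x)) h3
        have h5 : x₀ ^ q * (P x * F x) ≤ x₀ ^ q * (x₀ ^ n * F x) :=
          mul_le_mul_of_nonneg_left h3 (by positivity)
        nlinarith
    have hlow : x₀ ^ q * S ≤ I + ((x₀ ^ q + |c|) * x₀ ^ n) * NF := by
      have iC4 : Integrable (fun x => ((x₀ ^ q + |c|) * x₀ ^ n) * F x) :=
        hFi.const_mul _
      have h1 : (∫ x, x₀ ^ q * (P x * F x)) ≤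
          ∫ x, ((-h x) * (P x * F x) + ((x₀ ^ q + |c|) * x₀ ^ n) * F x) :=
        integral_mono (iPF.const_mul _) (iI.add iC4) hptw2
      rw [integral_add iI iC4, integral_const_mul, integral_const_mul] at h1
      exact h1
    refine ⟨iPF, ?_⟩
    have hfin : S ≤ C₁ := by
      rw [hC₁def, le_div_iff₀ (pow_pos hx₀ q)]
      nlinarith [hIle, hlow]
    exact hfin
  -- monotone convergence
  have hPk_mono : ∀ x : ℝ, Monotone fun k : ℕ =>
      ENNReal.ofReal (x ^ n / (1 + x ^ n / ((k : ℝ) + 1)) * F x) := by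
    intro x j k hjk
    apply ENNReal.ofReal_le_ofReal
    apply mul_le_mul_of_nonneg_right _ (hF0 x)
    have hj : (0:ℝ) < (j:ℝ) + 1 := by positivity
    have hk : (0:ℝ) < (k:ℝ) + 1 := by positivity
    have hjk' : (j:ℝ) + 1 ≤ (k:ℝ) + 1 := by
      have : (j:ℝ) ≤ (k:ℝ) := Nat.cast_le.mpr hjk
      linarith
    gcongr
    · exact hxnn x
    · have := hxnn x; positivity
    · exact hxnn x
  have hPk_tend : ∀ x : ℝ, Tendsto (fun k : ℕ =>
      ENNReal.ofReal (x ^ n / (1 + x ^ n / ((k : ℝ) + 1)) * F x)) atTop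
      (𝓝 (ENNReal.ofReal (x ^ n * F x))) := by
    intro x
    apply (ENNReal.continuous_ofReal.tendsto _).comp
    have h1 : Tendsto (fun k : ℕ => (k : ℝ) + 1) atTop atTop :=
      tendsto_natCast_atTop_atTop.atTop_add tendsto_const_nhds
    have h2 : Tendsto (fun k : ℕ => x ^ n / ((k : ℝ) + 1)) atTop (𝓝 0) :=
      Tendsto.div_atTop tendsto_const_nhds h1
    have h3 : Tendsto (fun k : ℕ => 1 + x ^ n / ((k : ℝ) + 1)) atTop (𝓝 1) := by
      have := h2.const_add 1
      simpa using this
    have h4 : Tendsto (fun k : ℕ => x ^ n / (1 + x ^ n / ((k : ℝ) + 1))) atTop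
        (𝓝 (x ^ n)) := by
      have := (tendsto_const_nhds (x := x ^ n) (f := atTop (α := ℕ))).div h3 one_ne_zero
      simpa [Pi.div_def] using this
    exact h4.mul_const (F x)
  have hmeasPk : ∀ k : ℕ, AEMeasurable (fun x : ℝ =>
      ENNReal.ofReal (x ^ n / (1 + x ^ n / ((k : ℝ) + 1)) * F x)) volume := by
    intro k
    have hk : (0:ℝ) < (k:ℝ) + 1 := by positivity
    have hPc : Continuous (fun x : ℝ => x ^ n / (1 + x ^ n / ((k : ℝ) + 1))) := by
      apply (continuous_pow n).div
        (continuous_const.add ((continuous_pow n).div_const _))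
      intro x
      have := hxnn x
      exact (by positivity : (0:ℝ) < 1 + x ^ n / ((k : ℝ) + 1)).ne'
    exact ENNReal.measurable_ofReal.comp_aemeasurable
      ((hPc.measurable.aemeasurable.mul hFi.aemeasurable))
  have hlim := lintegral_tendsto_of_tendsto_of_monotone hmeasPk
    (ae_of_all _ hPk_mono) (ae_of_all _ hPk_tend)
  have hbdd : ∀ k : ℕ, (∫⁻ x, ENNReal.ofReal (x ^ n / (1 + x ^ n / ((k : ℝ) + 1)) * F x))
      ≤ ENNReal.ofReal C₁ := by
    intro k
    have hk : (0:ℝ) < (k:ℝ) + 1 := by positivity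
    obtain ⟨hint, hle⟩ := key ((k : ℝ) + 1) hk
    rw [← ofReal_integral_eq_lintegral_ofReal hint
      (ae_of_all _ fun x => mul_nonneg (div_nonneg (hxnn x)
        (by have := hxnn x; positivity : (0:ℝ) < 1 + x ^ n / ((k:ℝ)+1)).le) (hF0 x))]
    exact ENNReal.ofReal_le_ofReal hle
  have hfin : (∫⁻ x, ENNReal.ofReal (x ^ n * F x)) ≤ ENNReal.ofReal C₁ :=
    le_of_tendsto' hlim hbdd
  refine ⟨((continuous_pow n).aestronglyMeasurable).mul hFm, ?_⟩
  rw [hasFiniteIntegral_iff_ofReal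
    (ae_of_all _ fun x => mul_nonneg (hxnn x) (hF0 x))]
  exact lt_of_le_of_lt hfin ENNReal.ofReal_lt_top
end

section
/- Let T > 0 and let a : [0,T] → [0,∞) be continuous. Then there exists a continuous function F : [0,T] → ℝ with 0 ≤ F(t) ≤ sup_{0≤s≤T} a(s) for all t, such that for every t ∈ [0,T]: F(t) = exp(−∫_0^t F(u) du) · a(t). -/
open MeasureTheory intervalIntegral

/-- Fixed-point existence: for `T > 0` and a continuous `a : [0,T] → [0,∞)`, there
exists a continuous `F : [0,T] → ℝ` with `0 ≤ F(t) ≤ sup_{[0,T]} a`, such that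
`F(t) = exp(−∫_0^t F(u) du) · a(t)` for every `t ∈ [0,T]`. -/
theorem fixed_point_exists (T : ℝ) (hT : 0 < T) (a : ℝ → ℝ)
    (ha : ContinuousOn a (Set.Icc 0 T)) (ha0 : ∀ t ∈ Set.Icc (0 : ℝ) T, 0 ≤ a t) :
    ∃ F : ℝ → ℝ, ContinuousOn F (Set.Icc 0 T) ∧
      (∀ t ∈ Set.Icc (0 : ℝ) T, 0 ≤ F t ∧ F t ≤ sSup (a '' Set.Icc 0 T)) ∧
      ∀ t ∈ Set.Icc (0 : ℝ) T, F t = Real.exp (-∫ u in (0 : ℝ)..t, F u) * a t := by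
  -- Extend `a` continuously to all of ℝ
  set b : ℝ → ℝ := fun t => a (Set.projIcc 0 T hT.le t) with hb_def
  have hb_cont : Continuous b := by
    apply ha.comp_continuous
    · exact continuous_subtype_val.comp continuous_projIcc
    · intro x; exact (Set.projIcc 0 T hT.le x).2
  have hb_eq : ∀ t ∈ Set.Icc (0 : ℝ) T, b t = a t := by
    intro t ht
    simp [hb_def, Set.projIcc_of_mem hT.le ht]
  have hb0 : ∀ t, 0 ≤ b t := fun t => ha0 _ (Set.projIcc 0 T hT.le t).2
  -- The antiderivative `A t = ∫_0^t b`
  set A : ℝ → ℝ := fun t => ∫ u in (0 : ℝ)..t, b u with hA_def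
  have hA_deriv : ∀ t : ℝ, HasDerivAt A (b t) t := fun t =>
    integral_hasDerivAt_right (hb_cont.intervalIntegrable 0 t)
      hb_cont.aestronglyMeasurable.stronglyMeasurableAtFilter hb_cont.continuousAt
  have hA_cont : Continuous A :=
    continuous_iff_continuousAt.mpr fun t => (hA_deriv t).continuousAt
  have hA_nonneg : ∀ t : ℝ, 0 ≤ t → 0 ≤ A t := fun t ht =>
    intervalIntegral.integral_nonneg ht (fun u _ => hb0 u)
  have hden : ∀ t : ℝ, 0 ≤ t → (0 : ℝ) < 1 + A t := fun t ht => by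
    linarith [hA_nonneg t ht]
  -- The explicit fixed point
  set F : ℝ → ℝ := fun t => b t / (1 + A t) with hF_def
  have hF_contOn : ContinuousOn F (Set.Icc 0 T) := by
    apply hb_cont.continuousOn.div ((continuous_const.add hA_cont).continuousOn)
    intro t ht
    exact (hden t ht.1).ne'
  refine ⟨F, hF_contOn, ?_, ?_⟩
  · intro t ht
    constructor
    · exact div_nonneg (hb0 t) (hden t ht.1).le
    · have h1 : F t ≤ b t := div_le_self (hb0 t) (by linarith [hA_nonneg t ht.1])
      have h2 : a t ≤ sSup (a '' Set.Icc 0 T) :=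
        le_csSup (isCompact_Icc.bddAbove_image ha) ⟨t, ht, rfl⟩
      rw [hb_eq t ht] at h1
      linarith
  · intro t ht
    -- key computation: ∫_0^t F = log (1 + A t)
    have huIcc : Set.uIcc (0 : ℝ) t = Set.Icc 0 t := Set.uIcc_of_le ht.1
    have hsub : Set.Icc (0 : ℝ) t ⊆ Set.Icc 0 T := Set.Icc_subset_Icc le_rfl ht.2
    have hint : ∫ u in (0 : ℝ)..t, F u = Real.log (1 + A t) := by
      have key : ∫ u in (0 : ℝ)..t, F u =
          Real.log (1 + A t) - Real.log (1 + A 0) := by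
        apply intervalIntegral.integral_eq_sub_of_hasDerivAt
        · intro u hu
          rw [huIcc] at hu
          have h1 : HasDerivAt (fun s => 1 + A s) (b u) u := (hA_deriv u).const_add 1
          have h2 := h1.log (hden u hu.1).ne'
          exact h2
        · exact ((hF_contOn.mono hsub).mono (le_of_eq huIcc)).intervalIntegrable
      have hA0 : A 0 = 0 := intervalIntegral.integral_same
      rw [key, hA0]
      simp
    rw [hint, Real.exp_neg, Real.exp_log (hden t ht.1), ← hb_eq t ht]
    rw [hF_def]
    field_simp
end
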